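/- Let β ∈ (1, 2), θ₀ ∈ (0, 1], and let G, L be positive integers with G ≥ L. Set V₂ = {(m₁, m₂) ∈ (GZ × LZ) : |m₂|^{1/β} < |m₁| ≤ θ₀|m₂|}. Then Σ_{m ∈ V₂} |m₁|^{(2−β)/(β−1)} |m₂|^{(1−2β)/(β−1)} ≤ C(β, θ₀) G^{−2} L^{−1} for some constant C(β, θ₀). -/

import Mathlib

open scoped Classical

private lemma tel_bound (n : ℕ) (hn : 1 ≤ n) :
    ((n : ℝ)) ^ (-(3/2) : ℝ) ≤
      6 * (((n : ℝ)) ^ (-(1/2) : ℝ) - (((n : ℝ) + 1)) ^ (-(1/2) : ℝ)) := by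
  have hn1 : (1 : ℝ) ≤ (n : ℝ) := by exact_mod_cast hn
  set x := Real.sqrt n with hxdef
  set y := Real.sqrt ((n : ℝ) + 1) with hydef
  have hx1 : 1 ≤ x := by
    rw [hxdef, show (1:ℝ) = Real.sqrt 1 by simp]
    exact Real.sqrt_le_sqrt hn1
  have hx0 : 0 < x := lt_of_lt_of_le one_pos hx1
  have hy0 : 0 < y := Real.sqrt_pos.mpr (by linarith)
  have hx2 : x ^ 2 = (n : ℝ) := Real.sq_sqrt (by positivity)
  have hy2 : y ^ 2 = (n : ℝ) + 1 := Real.sq_sqrt (by linarith)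
  have hyx : y ≤ 2 * x := by
    have h4 : (n : ℝ) + 1 ≤ 4 * n := by linarith
    calc y ≤ Real.sqrt (4 * n) := Real.sqrt_le_sqrt h4
      _ = 2 * x := by
          rw [show (4:ℝ) * n = (2:ℝ)^2 * n by ring, Real.sqrt_mul (by positivity),
            Real.sqrt_sq (by norm_num)]
  have e1 : ((n : ℝ)) ^ (-(1/2) : ℝ) = x⁻¹ := by
    rw [Real.rpow_neg (by positivity), hxdef, Real.sqrt_eq_rpow]
  have e2 : (((n : ℝ) + 1)) ^ (-(1/2) : ℝ) = y⁻¹ := by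
    rw [Real.rpow_neg (by positivity), hydef, Real.sqrt_eq_rpow]
  have e3 : ((n : ℝ)) ^ (-(3/2) : ℝ) = (x ^ 3)⁻¹ := by
    rw [Real.rpow_neg (by positivity)]
    congr 1
    rw [show (3/2 : ℝ) = (1/2 : ℝ) * (3 : ℕ) by norm_num,
      Real.rpow_mul (by positivity), Real.rpow_natCast, hxdef, Real.sqrt_eq_rpow]
  rw [e1, e2, e3]
  have key : x⁻¹ - y⁻¹ = 1 / (x * y * (x + y)) := by
    rw [inv_sub_inv hx0.ne' hy0.ne', div_eq_div_iff (by positivity) (by positivity)]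
    linear_combination (x*y) * hy2 - (x*y) * hx2
  rw [key, mul_one_div, inv_eq_one_div, div_le_div_iff₀ (by positivity) (by positivity)]
  nlinarith [mul_pos hx0 hy0, mul_pos hx0 hx0, mul_le_mul_of_nonneg_left hyx hx0.le,
    mul_le_mul_of_nonneg_left (mul_le_mul_of_nonneg_left hyx hx0.le) hx0.le]

private lemma tail_hasSum (K : ℕ) (hK : 1 ≤ K) :
    HasSum (fun i : ℕ =>
      (((K + i : ℕ) : ℝ)) ^ (-(1/2) : ℝ) - ((((K + i : ℕ) : ℝ)) + 1) ^ (-(1/2) : ℝ))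
      ((K : ℝ) ^ (-(1/2) : ℝ)) := by
  have hposn : ∀ i : ℕ, (0:ℝ) < ((K + i : ℕ) : ℝ) := by
    intro i
    have h1 : 0 < K + i := lt_of_lt_of_le hK (Nat.le_add_right _ _)
    exact_mod_cast h1
  have hnn : ∀ i : ℕ, 0 ≤
      (((K + i : ℕ) : ℝ)) ^ (-(1/2) : ℝ) - ((((K + i : ℕ) : ℝ)) + 1) ^ (-(1/2) : ℝ) := by
    intro i
    have h := Real.rpow_le_rpow_of_nonpos (hposn i)
      (by linarith [hposn i] : ((K + i : ℕ) : ℝ) ≤ ((K + i : ℕ) : ℝ) + 1)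
      (by norm_num : (-(1/2) : ℝ) ≤ 0)
    linarith
  rw [hasSum_iff_tendsto_nat_of_nonneg hnn]
  have hps : ∀ n : ℕ,
      (∑ i ∈ Finset.range n,
        ((((K + i : ℕ) : ℝ)) ^ (-(1/2) : ℝ) - ((((K + i : ℕ) : ℝ)) + 1) ^ (-(1/2) : ℝ)))
      = (K : ℝ) ^ (-(1/2) : ℝ) - ((K + n : ℕ) : ℝ) ^ (-(1/2) : ℝ) := by
    intro n
    have h1 : ∀ i : ℕ, i ∈ Finset.range n →
        ((((K + i : ℕ) : ℝ)) ^ (-(1/2) : ℝ) - ((((K + i : ℕ) : ℝ)) + 1) ^ (-(1/2) : ℝ))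
        = (fun j : ℕ => (((K + j : ℕ) : ℝ)) ^ (-(1/2) : ℝ)) i
            - (fun j : ℕ => (((K + j : ℕ) : ℝ)) ^ (-(1/2) : ℝ)) (i + 1) := by
      intro i _
      have h2 : (((K + i : ℕ) : ℝ)) + 1 = ((K + (i + 1) : ℕ) : ℝ) := by push_cast; ring
      simp only
      rw [h2]
    rw [Finset.sum_congr rfl h1, Finset.sum_range_sub']
    norm_num
  have h0 : Filter.Tendsto (fun n : ℕ => (((K + n : ℕ)) : ℝ) ^ (-(1/2) : ℝ))
      Filter.atTop (nhds 0) := by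
    have h1 : Filter.Tendsto (fun n : ℕ => (((K + n : ℕ)) : ℝ)) Filter.atTop Filter.atTop := by
      apply tendsto_natCast_atTop_atTop.comp
      exact Filter.tendsto_atTop_mono (fun n => Nat.le_add_left n K) Filter.tendsto_id
    exact (tendsto_rpow_neg_atTop (by norm_num : (0:ℝ) < 1/2)).comp h1
  have h2 : Filter.Tendsto
      (fun n : ℕ => (K : ℝ) ^ (-(1/2) : ℝ) - ((K + n : ℕ) : ℝ) ^ (-(1/2) : ℝ))
      Filter.atTop (nhds ((K : ℝ) ^ (-(1/2) : ℝ))) := by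
    have h3 := Filter.Tendsto.const_sub ((K : ℝ) ^ (-(1/2) : ℝ)) h0
    rw [sub_zero] at h3
    exact h3
  exact Filter.Tendsto.congr (fun n => (hps n).symm) h2

private lemma tail_rpow_sum_le (K : ℕ) (hK : 1 ≤ K) :
    (∑' n : ℕ, if K ≤ n then ((n : ℝ)) ^ (-(3/2) : ℝ) else 0)
      ≤ 6 * (K : ℝ) ^ (-(1/2) : ℝ) := by
  set F : ℕ → ℝ := fun n => if K ≤ n then ((n : ℝ)) ^ (-(3/2) : ℝ) else 0 with hF
  have hinj : Function.Injective (fun i : ℕ => K + i) := add_right_injective K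
  have hsupp : Function.support F ⊆ Set.range (fun i : ℕ => K + i) := by
    intro n hn
    rcases le_or_gt K n with h | h
    · exact ⟨n - K, by show K + (n - K) = n; omega⟩
    · exfalso; apply hn; simp [hF, not_le.mpr h]
  rw [← hinj.tsum_eq hsupp]
  have hFi : ∀ i : ℕ, F (K + i) = ((K + i : ℕ) : ℝ) ^ (-(3/2) : ℝ) := fun i => by
    simp [hF, Nat.le_add_right]
  have htel := tail_hasSum K hK
  have hle : ∀ i : ℕ, F (K + i) ≤
      6 * ((((K + i : ℕ) : ℝ)) ^ (-(1/2) : ℝ) - ((((K + i : ℕ) : ℝ)) + 1) ^ (-(1/2) : ℝ)) := by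
    intro i
    rw [hFi]
    exact tel_bound (K + i) (le_trans hK (Nat.le_add_right _ _))
  have hsummaj := htel.summable.mul_left 6
  have hnn : ∀ i : ℕ, 0 ≤ F (K + i) := fun i => by
    rw [hFi]; positivity
  calc (∑' i : ℕ, F (K + i))
      ≤ ∑' i : ℕ, 6 * ((((K + i : ℕ) : ℝ)) ^ (-(1/2) : ℝ)
          - ((((K + i : ℕ) : ℝ)) + 1) ^ (-(1/2) : ℝ)) :=
        Summable.tsum_le_tsum hle (Summable.of_nonneg_of_le hnn hle hsummaj) hsummaj
    _ = 6 * (K : ℝ) ^ (-(1/2) : ℝ) := by rw [tsum_mul_left, htel.tsum_eq]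

theorem lattice_sum_V2 (β θ₀ : ℝ) (hβ : β ∈ Set.Ioo (1 : ℝ) 2) (hθ : θ₀ ∈ Set.Ioc (0 : ℝ) 1) :
    ∃ C > (0 : ℝ), ∀ G L : ℕ, 0 < G → 0 < L → L ≤ G →
      (∑' m : ℤ × ℤ,
        if (G : ℤ) ∣ m.1 ∧ (L : ℤ) ∣ m.2 ∧
            (|m.2| : ℝ) ^ (1 / β) < (|m.1| : ℝ) ∧ (|m.1| : ℝ) ≤ θ₀ * |m.2|
        then (|m.1| : ℝ) ^ ((2 - β) / (β - 1)) * (|m.2| : ℝ) ^ ((1 - 2 * β) / (β - 1))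
        else 0) ≤ C / ((G : ℝ) ^ 2 * L) := by
  obtain ⟨hβ1, hβ2⟩ := hβ
  obtain ⟨hθ0, hθ1⟩ := hθ
  have hZsummable : Summable (fun j : ℤ => |(j : ℝ)| ^ (-(3/2) : ℝ)) :=
    Real.summable_abs_int_rpow (by norm_num)
  set Z : ℝ := ∑' j : ℤ, |(j : ℝ)| ^ (-(3/2) : ℝ) with hZdef
  have hZ0 : 0 ≤ Z := tsum_nonneg fun j => Real.rpow_nonneg (abs_nonneg _) _
  refine ⟨12 * (Z + 1), by positivity, ?_⟩
  intro G L hG hL hLG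
  have hGR : (0:ℝ) < G := by exact_mod_cast hG
  have hLR : (0:ℝ) < L := by exact_mod_cast hL
  have hb1 : β - 1 ≠ 0 := by intro h; rw [sub_eq_zero] at h; rw [h] at hβ1; exact lt_irrefl _ hβ1
  have ha : 0 ≤ (2 - β) / (β - 1) := div_nonneg (by linarith) (by linarith)
  have hab : (2 - β) / (β - 1) + (1 - 2*β) / (β - 1) = -3 := by
    rw [← add_div, div_eq_iff hb1]; ring
  set A : ℤ → ℝ := fun x =>
    if (G:ℤ) ∣ x then |(x : ℝ)| ^ (-(3/2) : ℝ) else 0 with hAdef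
  set B : ℤ → ℝ := fun y =>
    if (L:ℤ) ∣ y ∧ (G:ℝ) ≤ |(y : ℝ)| then |(y : ℝ)| ^ (-(3/2) : ℝ) else 0 with hBdef
  have hA0 : ∀ x, 0 ≤ A x := fun x => by
    rw [hAdef]; dsimp only; split <;> positivity
  have hB0 : ∀ y, 0 ≤ B y := fun y => by
    rw [hBdef]; dsimp only; split <;> positivity
  have hpt : ∀ m : ℤ × ℤ,
      (if (G : ℤ) ∣ m.1 ∧ (L : ℤ) ∣ m.2 ∧
            (|m.2| : ℝ) ^ (1 / β) < (|m.1| : ℝ) ∧ (|m.1| : ℝ) ≤ θ₀ * |m.2|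
        then (|m.1| : ℝ) ^ ((2 - β) / (β - 1)) * (|m.2| : ℝ) ^ ((1 - 2 * β) / (β - 1))
        else 0) ≤ A m.1 * B m.2 := by
    intro m
    split
    case isTrue h =>
      obtain ⟨hd1, hd2, hlt, hle⟩ := h
      rw [Int.cast_abs] at hle
      have h2nn : (0:ℝ) ≤ (|m.2| : ℝ) := by positivity
      have h1pos : (0:ℝ) < (|m.1| : ℝ) :=
        lt_of_le_of_lt (Real.rpow_nonneg h2nn _) hlt
      have h12 : (|m.1| : ℝ) ≤ (|m.2| : ℝ) := by
        calc (|m.1| : ℝ) ≤ θ₀ * (|m.2| : ℝ) := hle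
          _ ≤ 1 * (|m.2| : ℝ) := mul_le_mul_of_nonneg_right hθ1 h2nn
          _ = (|m.2| : ℝ) := one_mul _
      have h2pos : (0:ℝ) < (|m.2| : ℝ) := lt_of_lt_of_le h1pos h12
      have hm1ne : m.1 ≠ 0 := by
        intro h0
        rw [h0] at h1pos
        simp at h1pos
      have hG1 : (G:ℝ) ≤ (|m.1| : ℝ) := by
        have h := Int.le_of_dvd (abs_pos.mpr hm1ne) ((dvd_abs _ _).mpr hd1)
        exact_mod_cast h
      have hG2 : (G:ℝ) ≤ (|m.2| : ℝ) := le_trans hG1 h12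
      have hApos : A m.1 = (|m.1| : ℝ) ^ (-(3/2) : ℝ) := by
        rw [hAdef]; dsimp only; rw [if_pos hd1]
      have hBpos : B m.2 = (|m.2| : ℝ) ^ (-(3/2) : ℝ) := by
        rw [hBdef]; dsimp only; rw [if_pos ⟨hd2, hG2⟩]
      rw [hApos, hBpos]
      calc (|m.1| : ℝ) ^ ((2 - β) / (β - 1)) * (|m.2| : ℝ) ^ ((1 - 2 * β) / (β - 1))
          ≤ (|m.2| : ℝ) ^ ((2 - β) / (β - 1)) * (|m.2| : ℝ) ^ ((1 - 2 * β) / (β - 1)) :=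
            mul_le_mul_of_nonneg_right (Real.rpow_le_rpow h1pos.le h12 ha)
              (Real.rpow_nonneg h2nn _)
        _ = (|m.2| : ℝ) ^ ((2 - β) / (β - 1) + (1 - 2*β) / (β - 1)) :=
            (Real.rpow_add h2pos _ _).symm
        _ = (|m.2| : ℝ) ^ ((-(3/2) : ℝ) + (-(3/2) : ℝ)) := by
            rw [hab]; norm_num
        _ = (|m.2| : ℝ) ^ (-(3/2) : ℝ) * (|m.2| : ℝ) ^ (-(3/2) : ℝ) :=
            Real.rpow_add h2pos _ _
        _ ≤ (|m.1| : ℝ) ^ (-(3/2) : ℝ) * (|m.2| : ℝ) ^ (-(3/2) : ℝ) :=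
            mul_le_mul_of_nonneg_right
              (Real.rpow_le_rpow_of_nonpos h1pos h12 (by norm_num))
              (Real.rpow_nonneg h2nn _)
    case isFalse h => exact mul_nonneg (hA0 _) (hB0 _)
  -- A : summability and value
  have hGinj : Function.Injective (fun j : ℤ => (G:ℤ) * j) := fun x y h => by
    have hGne : (G:ℤ) ≠ 0 := by exact_mod_cast hG.ne'
    exact mul_left_cancel₀ hGne h
  have hAsupp : Function.support A ⊆ Set.range (fun j : ℤ => (G:ℤ) * j) := by
    intro x hx
    have hdvd : (G:ℤ) ∣ x := by
      by_contra hd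
      apply hx
      rw [hAdef]; dsimp only; rw [if_neg hd]
    obtain ⟨c, hc⟩ := hdvd
    exact ⟨c, hc.symm⟩
  have hAcomp : ∀ j : ℤ, A ((G:ℤ) * j)
      = (G:ℝ) ^ (-(3/2) : ℝ) * |(j : ℝ)| ^ (-(3/2) : ℝ) := by
    intro j
    have hcast : |(((G:ℤ) * j : ℤ) : ℝ)| = (G:ℝ) * |(j : ℝ)| := by
      push_cast
      rw [abs_mul, abs_of_pos hGR]
    rw [hAdef]; dsimp only
    rw [if_pos (dvd_mul_right _ _), hcast, Real.mul_rpow hGR.le (abs_nonneg _)]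
  have hAzero : ∀ x ∉ Set.range (fun j : ℤ => (G:ℤ) * j), A x = 0 := by
    intro x hx
    by_contra h
    exact hx (hAsupp h)
  have hAsum : Summable A := by
    rw [← hGinj.summable_iff hAzero]
    exact ((hZsummable.mul_left ((G:ℝ) ^ (-(3/2) : ℝ))).congr fun j => (hAcomp j).symm)
  have hAtsum : ∑' x, A x = (G:ℝ) ^ (-(3/2) : ℝ) * Z := by
    rw [← hGinj.tsum_eq hAsupp]
    simp_rw [hAcomp]
    rw [tsum_mul_left]
  -- B : summability and bound
  set K : ℕ := ⌈(G:ℝ) / (L:ℝ)⌉₊ with hKdef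
  have hK1 : 1 ≤ K := Nat.one_le_iff_ne_zero.mpr
    (Nat.pos_iff_ne_zero.mp (Nat.ceil_pos.mpr (div_pos hGR hLR)))
  have hLinj : Function.Injective (fun k : ℤ => (L:ℤ) * k) := fun x y h => by
    have hLne : (L:ℤ) ≠ 0 := by exact_mod_cast hL.ne'
    exact mul_left_cancel₀ hLne h
  set b' : ℤ → ℝ := fun k =>
    if (G:ℝ) ≤ (L:ℝ) * |(k : ℝ)| then ((L:ℝ) * |(k : ℝ)|) ^ (-(3/2) : ℝ) else 0 with hb'def
  have hb'0 : ∀ k, 0 ≤ b' k := fun k => by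
    rw [hb'def]; dsimp only; split <;> positivity
  have hBcomp : ∀ k : ℤ, B ((L:ℤ) * k) = b' k := by
    intro k
    have hcast : |(((L:ℤ) * k : ℤ) : ℝ)| = (L:ℝ) * |(k : ℝ)| := by
      push_cast
      rw [abs_mul, abs_of_pos hLR]
    rw [hBdef, hb'def]; dsimp only
    rw [hcast]
    simp [dvd_mul_right]
  have hBsupp : Function.support B ⊆ Set.range (fun k : ℤ => (L:ℤ) * k) := by
    intro y hy
    have hdvd : (L:ℤ) ∣ y := by
      by_contra hd
      apply hy
      rw [hBdef]; dsimp only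
      rw [if_neg (fun hc => hd hc.1)]
    obtain ⟨c, hc⟩ := hdvd
    exact ⟨c, hc.symm⟩
  have hBzero : ∀ y ∉ Set.range (fun k : ℤ => (L:ℤ) * k), B y = 0 := by
    intro y hy
    by_contra h
    exact hy (hBsupp h)
  have hb'le : ∀ k : ℤ, b' k ≤ (L:ℝ) ^ (-(3/2) : ℝ) * |(k : ℝ)| ^ (-(3/2) : ℝ) := by
    intro k
    rw [hb'def]; dsimp only
    split
    · rw [Real.mul_rpow hLR.le (abs_nonneg _)]
    · positivity
  have hb'sum : Summable b' :=
    Summable.of_nonneg_of_le hb'0 hb'le (hZsummable.mul_left _)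
  have hBsum : Summable B := by
    rw [← hLinj.summable_iff hBzero]
    exact hb'sum.congr fun k => (hBcomp k).symm
  set F : ℕ → ℝ := fun n => if K ≤ n then ((n : ℝ)) ^ (-(3/2) : ℝ) else 0 with hFdef
  have hb'nat : ∀ n : ℕ, b' (n : ℤ) = (L:ℝ) ^ (-(3/2) : ℝ) * F n := by
    intro n
    have habs : |((n : ℤ) : ℝ)| = (n : ℝ) := by
      push_cast; exact abs_of_nonneg (Nat.cast_nonneg n)
    have hiff : ((G:ℝ) ≤ (L:ℝ) * (n : ℝ)) ↔ K ≤ n := by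
      rw [hKdef, Nat.ceil_le, div_le_iff₀ hLR]
      constructor <;> intro h <;> linarith
    rw [hb'def, hFdef]; dsimp only
    rw [habs]
    by_cases h : K ≤ n
    · rw [if_pos (hiff.mpr h), if_pos h, Real.mul_rpow hLR.le (Nat.cast_nonneg n)]
    · rw [if_neg (fun hc => h (hiff.mp hc)), if_neg h, mul_zero]
  have hb'neg : ∀ n : ℕ, b' (-(n : ℤ)) = (L:ℝ) ^ (-(3/2) : ℝ) * F n := by
    intro n
    rw [← hb'nat n]
    rw [hb'def]; dsimp only
    rw [show ((-(n:ℤ) : ℤ) : ℝ) = -((n:ℤ) : ℝ) by push_cast; ring, abs_neg]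
  have hb'zero : b' 0 = 0 := by
    rw [hb'def]; dsimp only
    rw [show ((0:ℤ) : ℝ) = 0 by norm_num, abs_zero, mul_zero,
      if_neg (by linarith : ¬ (G:ℝ) ≤ 0)]
  have hb'tsum : ∑' k : ℤ, b' k
      ≤ 2 * ((L:ℝ) ^ (-(3/2) : ℝ) * (6 * (K : ℝ) ^ (-(1/2) : ℝ))) := by
    have hs1 : Summable (fun n : ℕ => b' (n : ℤ)) :=
      hb'sum.comp_injective (fun a b h => by exact_mod_cast h)
    have hs2 : Summable (fun n : ℕ => b' (-(n : ℤ))) :=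
      hb'sum.comp_injective (fun a b h => by
        simp only [neg_inj] at h
        exact_mod_cast h)
    rw [Summable.tsum_of_nat_of_neg hs1 hs2, hb'zero, sub_zero]
    have hF6 : ∑' n : ℕ, F n ≤ 6 * (K : ℝ) ^ (-(1/2) : ℝ) := tail_rpow_sum_le K hK1
    have hx : ∑' n : ℕ, b' (n : ℤ) ≤ (L:ℝ) ^ (-(3/2) : ℝ) * (6 * (K : ℝ) ^ (-(1/2) : ℝ)) := by
      calc ∑' n : ℕ, b' (n : ℤ) = (L:ℝ) ^ (-(3/2) : ℝ) * ∑' n : ℕ, F n := by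
            simp_rw [hb'nat]; rw [tsum_mul_left]
        _ ≤ (L:ℝ) ^ (-(3/2) : ℝ) * (6 * (K : ℝ) ^ (-(1/2) : ℝ)) :=
            mul_le_mul_of_nonneg_left hF6 (by positivity)
    have hy : ∑' n : ℕ, b' (-(n : ℤ)) ≤ (L:ℝ) ^ (-(3/2) : ℝ) * (6 * (K : ℝ) ^ (-(1/2) : ℝ)) := by
      calc ∑' n : ℕ, b' (-(n : ℤ)) = (L:ℝ) ^ (-(3/2) : ℝ) * ∑' n : ℕ, F n := by
            simp_rw [hb'neg]; rw [tsum_mul_left]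
        _ ≤ (L:ℝ) ^ (-(3/2) : ℝ) * (6 * (K : ℝ) ^ (-(1/2) : ℝ)) :=
            mul_le_mul_of_nonneg_left hF6 (by positivity)
    linarith
  have hBtsum : ∑' y, B y ≤ 2 * ((L:ℝ) ^ (-(3/2) : ℝ) * (6 * (K : ℝ) ^ (-(1/2) : ℝ))) := by
    rw [← hLinj.tsum_eq hBsupp]
    calc ∑' k : ℤ, B ((L:ℤ) * k) = ∑' k : ℤ, b' k := tsum_congr hBcomp
      _ ≤ _ := hb'tsum
  have hprodsum : Summable (fun p : ℤ × ℤ => A p.1 * B p.2) :=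
    hAsum.mul_of_nonneg hBsum hA0 hB0
  have hfsum : Summable (fun m : ℤ × ℤ =>
      if (G : ℤ) ∣ m.1 ∧ (L : ℤ) ∣ m.2 ∧
            (|m.2| : ℝ) ^ (1 / β) < (|m.1| : ℝ) ∧ (|m.1| : ℝ) ≤ θ₀ * |m.2|
        then (|m.1| : ℝ) ^ ((2 - β) / (β - 1)) * (|m.2| : ℝ) ^ ((1 - 2 * β) / (β - 1))
        else 0) := by
    apply Summable.of_nonneg_of_le _ hpt hprodsum
    intro m
    split <;> positivity
  have hprodtsum : ∑' p : ℤ × ℤ, A p.1 * B p.2 = (∑' x, A x) * (∑' y, B y) := by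
    rw [Summable.tsum_prod' hprodsum (fun x => hBsum.mul_left (A x))]
    calc ∑' (x : ℤ), ∑' (y : ℤ), A x * B y = ∑' (x : ℤ), A x * ∑' y, B y := by
          apply tsum_congr; intro x; rw [tsum_mul_left]
      _ = (∑' x, A x) * (∑' y, B y) := tsum_mul_right
  have hKge : ((G:ℝ) / (L:ℝ)) ≤ (K : ℝ) := Nat.le_ceil _
  have hKbound : (K : ℝ) ^ (-(1/2) : ℝ) ≤ ((G:ℝ) / (L:ℝ)) ^ (-(1/2) : ℝ) :=
    Real.rpow_le_rpow_of_nonpos (div_pos hGR hLR) hKge (by norm_num)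
  have hBnn : 0 ≤ ∑' y, B y := tsum_nonneg hB0
  have hfinal : (∑' x, A x) * (∑' y, B y)
      ≤ 12 * (Z + 1) / ((G:ℝ) ^ 2 * L) := by
    have h1 : (∑' x, A x) * (∑' y, B y)
        ≤ ((G:ℝ) ^ (-(3/2) : ℝ) * (Z + 1)) *
          (2 * ((L:ℝ) ^ (-(3/2) : ℝ) * (6 * ((G:ℝ) / (L:ℝ)) ^ (-(1/2) : ℝ)))) := by
      apply mul_le_mul
      · rw [hAtsum]
        exact mul_le_mul_of_nonneg_left (by linarith) (by positivity)
      · refine hBtsum.trans ?_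
        have h6 : (6 : ℝ) * (K : ℝ) ^ (-(1/2) : ℝ)
            ≤ 6 * ((G:ℝ) / (L:ℝ)) ^ (-(1/2) : ℝ) := by linarith
        have hLnn : (0:ℝ) ≤ (L:ℝ) ^ (-(3/2) : ℝ) := by positivity
        nlinarith [mul_le_mul_of_nonneg_left h6 hLnn]
      · exact hBnn
      · positivity
    refine h1.trans (le_of_eq ?_)
    have hdiv : ((G:ℝ) / (L:ℝ)) ^ (-(1/2) : ℝ)
        = (G:ℝ) ^ (-(1/2) : ℝ) * (L:ℝ) ^ ((1/2) : ℝ) := by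
      rw [Real.div_rpow hGR.le hLR.le, Real.rpow_neg hLR.le, div_eq_mul_inv, inv_inv]
    have hGG : (G:ℝ) ^ (-(3/2) : ℝ) * (G:ℝ) ^ (-(1/2) : ℝ) = ((G:ℝ) ^ 2)⁻¹ := by
      rw [← Real.rpow_add hGR,
        show (-(3/2) : ℝ) + (-(1/2) : ℝ) = ((-2 : ℤ) : ℝ) by norm_num,
        Real.rpow_intCast, zpow_neg,
        show ((2:ℤ)) = ((2:ℕ):ℤ) by norm_num, zpow_natCast]
    have hLL : (L:ℝ) ^ (-(3/2) : ℝ) * (L:ℝ) ^ ((1/2) : ℝ) = (L:ℝ)⁻¹ := by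
      rw [← Real.rpow_add hLR,
        show (-(3/2) : ℝ) + ((1/2) : ℝ) = -1 by norm_num, Real.rpow_neg_one]
    rw [hdiv]
    calc ((G:ℝ) ^ (-(3/2) : ℝ) * (Z + 1)) *
          (2 * ((L:ℝ) ^ (-(3/2) : ℝ) * (6 * ((G:ℝ) ^ (-(1/2) : ℝ) * (L:ℝ) ^ ((1/2) : ℝ)))))
        = 12 * (Z + 1) * (((G:ℝ) ^ (-(3/2) : ℝ) * (G:ℝ) ^ (-(1/2) : ℝ)) *
            ((L:ℝ) ^ (-(3/2) : ℝ) * (L:ℝ) ^ ((1/2) : ℝ))) := by ring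
      _ = 12 * (Z + 1) * (((G:ℝ) ^ 2)⁻¹ * (L:ℝ)⁻¹) := by rw [hGG, hLL]
      _ = 12 * (Z + 1) / ((G:ℝ) ^ 2 * (L:ℝ)) := by
          rw [div_eq_mul_inv, mul_inv]
  calc (∑' m : ℤ × ℤ,
        if (G : ℤ) ∣ m.1 ∧ (L : ℤ) ∣ m.2 ∧
            (|m.2| : ℝ) ^ (1 / β) < (|m.1| : ℝ) ∧ (|m.1| : ℝ) ≤ θ₀ * |m.2|
        then (|m.1| : ℝ) ^ ((2 - β) / (β - 1)) * (|m.2| : ℝ) ^ ((1 - 2 * β) / (β - 1))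
        else 0)
      ≤ ∑' p : ℤ × ℤ, A p.1 * B p.2 := Summable.tsum_le_tsum hpt hfsum hprodsum
    _ = (∑' x, A x) * (∑' y, B y) := hprodtsum
    _ ≤ 12 * (Z + 1) / ((G:ℝ) ^ 2 * L) := hfinal
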